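/- Let R be a commutative ring of prime characteristic p > 0. Suppose 𝔞 = 𝔞₁^{M₁} + ⋯ + 𝔞ₘ^{Mₘ}, where each 𝔞ᵢ ⊆ R is an ideal generated by at most lᵢ elements and Mᵢ ≥ 1 are integers. Set l := Σᵢ lᵢ. If a ≥ 0 and b > p^e(l − 1), then 𝔞^(a·p^e + b) = (𝔞^a)^[p^e] · 𝔞^b. -/

import Mathlib

/-- The Frobenius power `I^[q]` of an ideal. -/
def frobPow {R : Type*} [CommSemiring R] (I : Ideal R) (q : ℕ) : Ideal R :=
  Ideal.span ((fun f => f ^ q) '' (I : Set R))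

section Aux

variable {R : Type*} [CommRing R]

/-- A finite sum of ideals is contained in `J` if each summand is. -/
lemma aux_sum_ideal_le {ι : Type*} (s : Finset ι) (f : ι → Ideal R) (J : Ideal R)
    (h : ∀ i ∈ s, f i ≤ J) : (∑ i ∈ s, f i) ≤ J := by
  classical
  induction s using Finset.induction_on with
  | empty => simp
  | insert _ _ ha ih =>
    rename_i a s'
    rw [Finset.sum_insert ha, Submodule.add_eq_sup]
    exact sup_le (h a (Finset.mem_insert_self a s'))
      (ih fun i hi => h i (Finset.mem_insert_of_mem hi))

/-- Each summand of a finite sum of ideals is contained in the sum. -/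
lemma aux_le_ideal_sum {ι : Type*} (s : Finset ι) (f : ι → Ideal R) {j : ι} (hj : j ∈ s) :
    f j ≤ ∑ i ∈ s, f i := by
  classical
  rw [← Finset.add_sum_erase s f hj, Submodule.add_eq_sup]
  exact le_sup_left

/-- Selection lemma: if `k` is at most a finite sum, one can select a pointwise
smaller family with sum exactly `k`. -/
lemma aux_exists_le_sum {ι : Type*} [DecidableEq ι] (s : Finset ι) (c : ι → ℕ) (k : ℕ)
    (hk : k ≤ ∑ i ∈ s, c i) :
    ∃ d : ι → ℕ, (∀ i, d i ≤ c i) ∧ (∑ i ∈ s, d i) = k := by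
  induction s using Finset.induction_on generalizing k with
  | empty =>
    simp only [Finset.sum_empty] at hk
    exact ⟨0, fun i => Nat.zero_le _, by simp; omega⟩
  | insert _ _ ha ih =>
    rename_i a s'
    rw [Finset.sum_insert ha] at hk
    obtain ⟨d, hd1, hd2⟩ := ih (k - min k (c a)) (by omega)
    refine ⟨Function.update d a (min k (c a)), ?_, ?_⟩
    · intro i
      rcases eq_or_ne i a with rfl | h
      · rw [Function.update_self]; omega
      · rw [Function.update_of_ne h]; exact hd1 i
    · have hcong : (∑ x ∈ s', Function.update d a (min k (c a)) x) = ∑ x ∈ s', d x :=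
        Finset.sum_congr rfl fun i hi => Function.update_of_ne (ne_of_mem_of_not_mem hi ha) _ _
      rw [Finset.sum_insert ha, Function.update_self, hcong, hd2]
      omega

/-- A monomial in elements of `S` lies in the corresponding power of `span S`. -/
lemma aux_monomial_mem_pow (S : Finset R) (c : R → ℕ) :
    (∏ y ∈ S, y ^ c y) ∈ Ideal.span (S : Set R) ^ (∑ y ∈ S, c y) := by
  rw [← Finset.prod_pow_eq_pow_sum]
  exact Ideal.prod_mem_prod fun y hy => Ideal.pow_mem_pow (Ideal.subset_span hy) _

/-- A power of a finitely generated ideal is spanned by monomials. -/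
lemma aux_pow_le_span_monomials (S : Finset R) (k : ℕ) :
    Ideal.span (S : Set R) ^ k ≤
      Ideal.span {x | ∃ c : R → ℕ, (∑ y ∈ S, c y) = k ∧ x = ∏ y ∈ S, y ^ c y} := by
  classical
  induction k with
  | zero =>
    rw [pow_zero, Ideal.one_eq_top, top_le_iff, Ideal.eq_top_iff_one]
    exact Ideal.subset_span ⟨0, by simp, by simp⟩
  | succ k ih =>
    rw [pow_succ]
    refine le_trans (Ideal.mul_mono ih le_rfl) ?_
    rw [Ideal.span_mul_span', Ideal.span_le]
    rintro z hz
    obtain ⟨x, hx, s, hs, rfl⟩ := hz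
    obtain ⟨c, hc, rfl⟩ := hx
    refine Ideal.subset_span ⟨Function.update c s (c s + 1), ?_, ?_⟩
    · rw [Finset.sum_update_of_mem hs]
      rw [← Finset.add_sum_erase S c hs, Finset.erase_eq] at hc
      omega
    · have h1 : (∏ y ∈ S, y ^ Function.update c s (c s + 1) y)
          = s ^ (c s + 1) * ∏ y ∈ S.erase s, y ^ c y := by
        rw [← Finset.mul_prod_erase S (fun y => y ^ Function.update c s (c s + 1) y) hs,
          Function.update_self]
        congr 1
        exact Finset.prod_congr rfl fun y hy => by
          rw [Function.update_of_ne (Finset.ne_of_mem_erase hy)]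
      rw [h1, ← Finset.mul_prod_erase S (fun y => y ^ c y) hs]
      ring

/-- Powers of a finite sum of powers of finitely generated ideals
are spanned by grouped monomials. -/
lemma aux_pow_sum_le_span_bigmonomials {m : ℕ} (S : Fin m → Finset R) (M : Fin m → ℕ)
    (𝔞 : Ideal R) (h𝔞 : 𝔞 = ∑ i, Ideal.span (S i : Set R) ^ M i) (N : ℕ) :
    𝔞 ^ N ≤ Ideal.span {x | ∃ (n : Fin m → ℕ) (c : Fin m → R → ℕ),
      (∑ i, n i) = N ∧ (∀ i, (∑ y ∈ S i, c i y) = M i * n i) ∧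
      x = ∏ i, ∏ y ∈ S i, y ^ c i y} := by
  classical
  induction N with
  | zero =>
    rw [pow_zero, Ideal.one_eq_top, top_le_iff, Ideal.eq_top_iff_one]
    exact Ideal.subset_span ⟨0, 0, by simp, by simp, by simp⟩
  | succ N ih =>
    have h1 : 𝔞 ≤ Ideal.span
        {w | ∃ (i : Fin m) (d : R → ℕ), (∑ y ∈ S i, d y) = M i ∧ w = ∏ y ∈ S i, y ^ d y} := by
      rw [h𝔞]
      refine aux_sum_ideal_le _ _ _ fun i _ =>
        le_trans (aux_pow_le_span_monomials (S i) (M i)) (Ideal.span_mono ?_)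
      rintro w ⟨c, hc, rfl⟩
      exact ⟨i, c, hc, rfl⟩
    rw [pow_succ]
    refine le_trans (Ideal.mul_mono ih h1) ?_
    rw [Ideal.span_mul_span', Ideal.span_le]
    rintro z hz
    obtain ⟨x, hx, w, hw, rfl⟩ := hz
    obtain ⟨n, c, hn, hc, rfl⟩ := hx
    obtain ⟨i0, d, hd, rfl⟩ := hw
    refine Ideal.subset_span
      ⟨fun i => if i = i0 then n i + 1 else n i,
       fun i y => if i = i0 then c i y + d y else c i y, ?_, ?_, ?_⟩
    · beta_reduce
      have e : (∑ i, if i = i0 then n i + 1 else n i)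
          = ∑ i, (n i + if i = i0 then 1 else 0) :=
        Finset.sum_congr rfl fun i _ => by by_cases h : i = i0 <;> simp [h]
      rw [e, Finset.sum_add_distrib, hn, Finset.sum_ite_eq' Finset.univ i0 (fun _ => 1)]
      simp
    · intro i
      beta_reduce
      by_cases h : i = i0
      · have e : (∑ y ∈ S i, if i = i0 then c i y + d y else c i y)
            = ∑ y ∈ S i, (c i y + d y) := Finset.sum_congr rfl fun y _ => if_pos h
        rw [e, if_pos h, Finset.sum_add_distrib, hc i, h, hd]
        ring
      · have e : (∑ y ∈ S i, if i = i0 then c i y + d y else c i y)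
            = ∑ y ∈ S i, c i y := Finset.sum_congr rfl fun y _ => if_neg h
        rw [e, if_neg h]
        exact hc i
    · beta_reduce
      rw [← Finset.mul_prod_erase Finset.univ
          (fun i => ∏ y ∈ S i, y ^ (if i = i0 then c i y + d y else c i y))
          (Finset.mem_univ i0),
        ← Finset.mul_prod_erase Finset.univ
          (fun i => ∏ y ∈ S i, y ^ c i y) (Finset.mem_univ i0)]
      have e1 : (∏ y ∈ S i0, y ^ (if i0 = i0 then c i0 y + d y else c i0 y))
          = (∏ y ∈ S i0, y ^ c i0 y) * ∏ y ∈ S i0, y ^ d y := by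
        have e0 : ∀ y ∈ S i0, y ^ (if i0 = i0 then c i0 y + d y else c i0 y)
            = y ^ c i0 y * y ^ d y := fun y _ => by rw [if_pos rfl, pow_add]
        rw [Finset.prod_congr rfl e0, Finset.prod_mul_distrib]
      have e2 : (∏ i ∈ Finset.univ.erase i0,
            ∏ y ∈ S i, y ^ (if i = i0 then c i y + d y else c i y))
          = ∏ i ∈ Finset.univ.erase i0, ∏ y ∈ S i, y ^ c i y :=
        Finset.prod_congr rfl fun i hi => by
          simp only [if_neg (Finset.ne_of_mem_erase hi)]
      rw [e1, e2]
      ring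

end Aux

/-- Generalized Skoda-type lemma: if `𝔞 = 𝔞₁^{M₁} + ⋯ + 𝔞ₘ^{Mₘ}` with `𝔞ᵢ` generated
by at most `lᵢ` elements, `Mᵢ ≥ 1`, `l = Σᵢ lᵢ`, and `b > p^e(l − 1)`, then
`𝔞^(a·p^e + b) = (𝔞^a)^[p^e] · 𝔞^b`. -/
theorem pow_eq_frobPow_mul_sum {R : Type*} [CommRing R] (p : ℕ) (hp : p.Prime) [CharP R p]
    (m : ℕ) (𝔞i : Fin m → Ideal R) (M : Fin m → ℕ) (hM : ∀ i, 1 ≤ M i)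
    (li : Fin m → ℕ)
    (hgen : ∀ i, ∃ S : Finset R, S.card ≤ li i ∧ Ideal.span (S : Set R) = 𝔞i i)
    (𝔞 : Ideal R) (h𝔞 : 𝔞 = ∑ i, 𝔞i i ^ M i)
    (l : ℕ) (hl : l = ∑ i, li i)
    (a b e : ℕ) (hb : (p : ℤ) ^ e * ((l : ℤ) - 1) < (b : ℤ)) :
    𝔞 ^ (a * p ^ e + b) = frobPow (𝔞 ^ a) (p ^ e) * 𝔞 ^ b := by
  classical
  set q := p ^ e with hqdef
  have hq1 : 1 ≤ q := Nat.one_le_pow _ _ hp.pos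
  choose S hScard hSspan using hgen
  apply le_antisymm
  · -- hard direction
    have h𝔞' : 𝔞 = ∑ i, Ideal.span (S i : Set R) ^ M i := by
      rw [h𝔞]
      exact Finset.sum_congr rfl fun i _ => by rw [hSspan i]
    refine le_trans (aux_pow_sum_le_span_bigmonomials S M 𝔞 h𝔞' (a * q + b)) ?_
    rw [Ideal.span_le]
    rintro x ⟨n, c, hnsum, hcsum, rfl⟩
    set D : Fin m → ℕ := fun i => ∑ y ∈ S i, c i y / q with hDdef
    have hqD : ∀ i, q * D i ≤ M i * n i := by
      intro i
      rw [← hcsum i]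
      simp only [hDdef, Finset.mul_sum]
      exact Finset.sum_le_sum fun y _ => Nat.mul_div_le (c i y) q
    set u : Fin m → ℕ := fun i => D i / M i with hudef
    have hMu : ∀ i, M i * u i ≤ D i := fun i => Nat.mul_div_le (D i) (M i)
    -- per-group bound
    have hgrp : ∀ i, n i ≤ q * (u i + (S i).card) := by
      intro i
      rcases Nat.eq_zero_or_pos (S i).card with h0 | hpos
      · have hSe : S i = ∅ := Finset.card_eq_zero.mp h0
        have h2 := hcsum i
        rw [hSe, Finset.sum_empty] at h2
        have hMi := hM i
        have hn0 : n i = 0 := by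
          rcases Nat.mul_eq_zero.mp h2.symm with h | h
          · omega
          · exact h
        rw [hn0]
        exact Nat.zero_le _
      · have hsum1 : M i * n i + (S i).card ≤ q * D i + (S i).card * q := by
          have hle : ∀ y ∈ S i, c i y + 1 ≤ q * (c i y / q) + q := by
            intro y _
            have h := Nat.div_add_mod (c i y) q
            have h2 := Nat.mod_lt (c i y) (show 0 < q by omega)
            omega
          calc M i * n i + (S i).card
              = ∑ y ∈ S i, (c i y + 1) := by
                rw [Finset.sum_add_distrib, Finset.sum_const, smul_eq_mul, mul_one, hcsum i]
            _ ≤ ∑ y ∈ S i, (q * (c i y / q) + q) := Finset.sum_le_sum hle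
            _ = q * D i + (S i).card * q := by
                simp only [hDdef]
                rw [Finset.sum_add_distrib, ← Finset.mul_sum, Finset.sum_const, smul_eq_mul]
        have h2 : D i < (u i + 1) * M i := by
          have h3 : D i / M i < u i + 1 := Nat.lt_succ_self _
          exact (Nat.div_lt_iff_lt_mul (hM i)).mp h3
        have hfinal : M i * n i ≤ M i * (q * (u i + (S i).card)) := by
          have hMi := hM i
          zify at hsum1 h2 ⊢
          nlinarith [mul_nonneg (mul_nonneg (by positivity : (0:ℤ) ≤ (q:ℤ))
              (by omega : (0:ℤ) ≤ (M i : ℤ) - 1))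
              (by omega : (0:ℤ) ≤ ((S i).card : ℤ) - 1),
            mul_le_mul_of_nonneg_left (Int.add_one_le_iff.mpr h2)
              (by positivity : (0:ℤ) ≤ (q : ℤ))]
        exact Nat.le_of_mul_le_mul_left hfinal (hM i)
    -- global arithmetic
    have hcards : (∑ i, (S i).card) ≤ l := by
      rw [hl]; exact Finset.sum_le_sum fun i _ => hScard i
    have hsum_n : (∑ i, n i) ≤ q * (∑ i, u i) + q * l := by
      calc (∑ i, n i) ≤ ∑ i, q * (u i + (S i).card) := Finset.sum_le_sum fun i _ => hgrp i
        _ = q * (∑ i, u i) + q * (∑ i, (S i).card) := by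
            rw [← Finset.mul_sum, Finset.sum_add_distrib, mul_add]
        _ ≤ q * (∑ i, u i) + q * l := add_le_add_right (mul_le_mul_right hcards q) _
    have ha_le : a ≤ ∑ i, u i := by
      have h1 : (a : ℤ) * q + b ≤ (q : ℤ) * ((∑ i, u i : ℕ) : ℤ) + (q : ℤ) * l := by
        rw [hnsum] at hsum_n
        exact_mod_cast hsum_n
      have h2 : (q : ℤ) * ((l : ℤ) - 1) < b := by
        have : ((q : ℕ) : ℤ) = (p : ℤ) ^ e := by rw [hqdef]; push_cast; ring
        rw [this]
        exact hb
      have h3 : (q : ℤ) * ((a : ℤ) - 1) < (q : ℤ) * ((∑ i, u i : ℕ) : ℤ) := by nlinarith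
      have h4 : (a : ℤ) - 1 < ((∑ i, u i : ℕ) : ℤ) :=
        lt_of_mul_lt_mul_left h3 (by positivity)
      have h5 : (a : ℤ) ≤ ((∑ i, u i : ℕ) : ℤ) := Int.lt_add_one_iff.mp (by linarith)
      exact_mod_cast h5
    obtain ⟨av, hav_le, hav_sum⟩ := aux_exists_le_sum Finset.univ u a ha_le
    have hqav : ∀ i, q * av i ≤ n i := by
      intro i
      have h1 : M i * (q * av i) ≤ M i * n i := by
        calc M i * (q * av i) = q * (M i * av i) := by ring
          _ ≤ q * (M i * u i) := mul_le_mul_right (mul_le_mul_right (hav_le i) _) q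
          _ ≤ q * D i := mul_le_mul_right (hMu i) q
          _ ≤ M i * n i := hqD i
      exact Nat.le_of_mul_le_mul_left h1 (hM i)
    have hdex : ∀ i, ∃ d : R → ℕ, (∀ y, d y ≤ c i y / q) ∧ (∑ y ∈ S i, d y) = M i * av i := by
      intro i
      apply aux_exists_le_sum
      calc M i * av i ≤ M i * u i := mul_le_mul_right (hav_le i) _
        _ ≤ D i := hMu i
    choose d hd_le hd_sum using hdex
    have hqd : ∀ i y, q * d i y ≤ c i y := fun i y =>
      calc q * d i y ≤ q * (c i y / q) := mul_le_mul_right (hd_le i y) q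
        _ ≤ c i y := Nat.mul_div_le (c i y) q
    set f := ∏ i, ∏ y ∈ S i, y ^ d i y with hfdef
    have hx : (∏ i, ∏ y ∈ S i, y ^ c i y)
        = f ^ q * ∏ i, ∏ y ∈ S i, y ^ (c i y - q * d i y) := by
      rw [hfdef, ← Finset.prod_pow, ← Finset.prod_mul_distrib]
      refine Finset.prod_congr rfl fun i _ => ?_
      rw [← Finset.prod_pow, ← Finset.prod_mul_distrib]
      refine Finset.prod_congr rfl fun y _ => ?_
      rw [← pow_mul', ← pow_add]
      congr 1
      have := hqd i y
      omega
    rw [hx]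
    have hsubpow : ∀ i (k : ℕ), Ideal.span (S i : Set R) ^ (M i * k) ≤ 𝔞 ^ k := by
      intro i k
      rw [pow_mul, hSspan i]
      refine Ideal.pow_right_mono ?_ k
      rw [h𝔞]
      exact aux_le_ideal_sum Finset.univ (fun j => 𝔞i j ^ M j) (Finset.mem_univ i)
    have hf : f ∈ 𝔞 ^ a := by
      rw [hfdef, ← hav_sum, ← Finset.prod_pow_eq_pow_sum]
      refine Ideal.prod_mem_prod fun i _ => ?_
      refine hsubpow i (av i) ?_
      rw [← hd_sum i]
      exact aux_monomial_mem_pow (S i) (d i)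
    have hg : (∏ i, ∏ y ∈ S i, y ^ (c i y - q * d i y)) ∈ 𝔞 ^ b := by
      have hbeq : b = ∑ i, (n i - q * av i) := by
        rw [Finset.sum_tsub_distrib Finset.univ fun i _ => hqav i, hnsum,
          ← Finset.mul_sum, hav_sum, mul_comm q a, Nat.add_sub_cancel_left]
      rw [hbeq, ← Finset.prod_pow_eq_pow_sum]
      refine Ideal.prod_mem_prod fun i _ => ?_
      refine hsubpow i (n i - q * av i) ?_
      have hsum_i : (∑ y ∈ S i, (c i y - q * d i y)) = M i * (n i - q * av i) := by
        rw [Finset.sum_tsub_distrib (S i) fun y _ => hqd i y, hcsum i, ← Finset.mul_sum,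
          hd_sum i, Nat.mul_sub_left_distrib]
        congr 1
        ring
      rw [← hsum_i]
      exact aux_monomial_mem_pow _ _
    exact Ideal.mul_mem_mul (Ideal.subset_span ⟨f, hf, rfl⟩) hg
  · -- easy direction
    have h1 : frobPow (𝔞 ^ a) q ≤ 𝔞 ^ (a * q) := by
      rw [frobPow, Ideal.span_le]
      rintro _ ⟨g, hg, rfl⟩
      rw [SetLike.mem_coe, pow_mul]
      exact Ideal.pow_mem_pow hg q
    calc frobPow (𝔞 ^ a) q * 𝔞 ^ b ≤ 𝔞 ^ (a * q) * 𝔞 ^ b := Ideal.mul_mono h1 le_rfl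
      _ = 𝔞 ^ (a * q + b) := (pow_add 𝔞 (a * q) b).symm
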